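/- Let g : ℝⁿ → ℝᵐ be the quadratic map with components g_i(x) = (1/2)⟨A_i x, x⟩ + ⟨b_i, x⟩, where each A_i is a symmetric real n×n matrix and b_i ∈ ℝⁿ. Let H be the m×n matrix whose rows are b₁ᵀ, …, b_mᵀ, and suppose there is μ₀ > 0 with ‖Hᵀh‖ ≥ μ₀‖h‖ for all h ∈ ℝᵐ. Let L > 0 be a Lipschitz constant for the derivative g' on ℝⁿ in the operator norm (‖g'(x) − g'(x')‖ ≤ L‖x − x'‖ for all x, x'). Then for every y ∈ ℝᵐ with ‖y‖ < μ₀²/(4L) there exists x* with g(x*) = y and ‖x*‖ ≤ μ₀/(2L). -/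

import Mathlib

private lemma euclid_norm_le_sum_abs {m : ℕ} (v : EuclideanSpace ℝ (Fin m)) :
    ‖v‖ ≤ ∑ i, |v i| := by
  rw [EuclideanSpace.norm_eq]
  have h1 : ∑ i, ‖v i‖ ^ 2 ≤ (∑ i, |v i|) ^ 2 := by
    simpa [Real.norm_eq_abs] using
      Finset.sum_sq_le_sq_sum_of_nonneg (f := fun i => |v i|) (s := Finset.univ)
        (fun i _ => abs_nonneg _)
  calc √(∑ i, ‖v i‖ ^ 2) ≤ √((∑ i, |v i|) ^ 2) := Real.sqrt_le_sqrt h1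
    _ = ∑ i, |v i| := Real.sqrt_sq (Finset.sum_nonneg fun i _ => abs_nonneg _)

private lemma adjoint_identity {n m : ℕ} (H : Matrix (Fin m) (Fin n) ℝ)
    (x : EuclideanSpace ℝ (Fin n)) (h : EuclideanSpace ℝ (Fin m)) :
    (inner ℝ ((Matrix.toEuclideanLin H).toContinuousLinearMap x) h : ℝ) =
      inner ℝ x ((Matrix.toEuclideanLin H.transpose).toContinuousLinearMap h) := by
  simp only [LinearMap.coe_toContinuousLinearMap', PiLp.inner_apply, RCLike.inner_apply,
    conj_trivial, Matrix.toEuclideanLin_apply, PiLp.toLp_apply,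
    Matrix.mulVec, dotProduct, Matrix.transpose_apply, Finset.sum_mul, Finset.mul_sum]
  rw [Finset.sum_comm]
  apply Finset.sum_congr rfl; intros; apply Finset.sum_congr rfl; intros; ring

private lemma row_apply {n m : ℕ} (b : Fin m → EuclideanSpace ℝ (Fin n))
    (H : Matrix (Fin m) (Fin n) ℝ) (hH : ∀ i j, H i j = b i j)
    (x : EuclideanSpace ℝ (Fin n)) (i : Fin m) :
    (Matrix.toEuclideanLin H).toContinuousLinearMap x i = (inner ℝ (b i) x : ℝ) := by
  simp only [LinearMap.coe_toContinuousLinearMap', Matrix.toEuclideanLin_apply,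
    PiLp.toLp_apply, Matrix.mulVec, dotProduct,
    PiLp.inner_apply, RCLike.inner_apply, conj_trivial, hH]
  exact Finset.sum_congr rfl fun _ _ => mul_comm _ _

/-- right inverse with controlled norm, from lower bound on the adjoint -/
private lemma right_inverse_of_adjoint_bound {n m : ℕ} (μ₀ : ℝ) (hμ₀ : 0 < μ₀)
    (H : Matrix (Fin m) (Fin n) ℝ)
    (hμ : ∀ h : EuclideanSpace ℝ (Fin m),
      μ₀ * ‖h‖ ≤ ‖Matrix.toEuclideanLin H.transpose h‖) (y : EuclideanSpace ℝ (Fin m)) :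
    ∃ x : EuclideanSpace ℝ (Fin n),
      (Matrix.toEuclideanLin H).toContinuousLinearMap x = y ∧ ‖x‖ ≤ μ₀⁻¹ * ‖y‖ := by
  set Hc : EuclideanSpace ℝ (Fin n) →L[ℝ] EuclideanSpace ℝ (Fin m) :=
    (Matrix.toEuclideanLin H).toContinuousLinearMap with hHc
  set T : EuclideanSpace ℝ (Fin m) →L[ℝ] EuclideanSpace ℝ (Fin n) :=
    (Matrix.toEuclideanLin H.transpose).toContinuousLinearMap with hT
  have hTnorm : ∀ h, μ₀ * ‖h‖ ≤ ‖T h‖ := fun h => hμ h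
  have hadj : ∀ x h, (inner ℝ (Hc x) h : ℝ) = inner ℝ x (T h) := fun x h => adjoint_identity H x h
  -- S := Hc ∘ T is injective hence surjective
  have hinj : Function.Injective (Hc.comp T) := by
    intro h h' hhh
    have hd0 : Hc (T (h - h')) = 0 := by
      have : Hc.comp T (h - h') = 0 := by rw [map_sub, hhh]; simp
      simpa [ContinuousLinearMap.comp_apply] using this
    have hTz : T (h - h') = 0 := by
      have : (inner ℝ (T (h - h')) (T (h - h')) : ℝ) = 0 := by
        rw [← hadj (T (h - h')) (h - h'), hd0, inner_zero_left]
      exact inner_self_eq_zero.mp this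
    have h0 : μ₀ * ‖h - h'‖ ≤ 0 := by simpa [hTz] using hTnorm (h - h')
    have hle : ‖h - h'‖ ≤ 0 := by nlinarith [norm_nonneg (h - h')]
    have : h - h' = 0 := by
      rw [← norm_eq_zero]; exact le_antisymm hle (norm_nonneg _)
    exact sub_eq_zero.mp this
  have hsurj : Function.Surjective (Hc.comp T) := by
    exact (LinearMap.injective_iff_surjective
      (f := (Hc.comp T : EuclideanSpace ℝ (Fin m) →ₗ[ℝ] EuclideanSpace ℝ (Fin m)))).mp hinj
  obtain ⟨h, hh⟩ := hsurj y
  have hh' : Hc (T h) = y := by simpa [ContinuousLinearMap.comp_apply] using hh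
  refine ⟨T h, hh', ?_⟩
  have h3 : ‖h‖ ≤ μ₀⁻¹ * ‖T h‖ := by
    rw [← mul_le_mul_iff_right₀ hμ₀, ← mul_assoc, mul_inv_cancel₀ hμ₀.ne', one_mul]
    exact hTnorm h
  have key : ‖T h‖ * ‖T h‖ ≤ (μ₀⁻¹ * ‖y‖) * ‖T h‖ := by
    have h1 : ‖T h‖ * ‖T h‖ = inner ℝ (Hc (T h)) h := by
      rw [hadj (T h) h, real_inner_self_eq_norm_mul_norm]
    have h2 : (inner ℝ (Hc (T h)) h : ℝ) ≤ ‖y‖ * ‖h‖ := by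
      rw [hh']; exact real_inner_le_norm y h
    calc ‖T h‖ * ‖T h‖ = inner ℝ (Hc (T h)) h := h1
      _ ≤ ‖y‖ * ‖h‖ := h2
      _ ≤ ‖y‖ * (μ₀⁻¹ * ‖T h‖) := mul_le_mul_of_nonneg_left h3 (norm_nonneg _)
      _ = (μ₀⁻¹ * ‖y‖) * ‖T h‖ := by ring
  rcases eq_or_lt_of_le (norm_nonneg (T h)) with h0 | h0
  · rw [← h0]; positivity
  · exact le_of_mul_le_mul_right key h0

/-- solvability of quadratic equations `g x = y` for `‖y‖ < μ₀²/(4L)`. -/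
theorem stmt10 {n m : ℕ} (μ₀ L : ℝ) (hμ₀ : 0 < μ₀) (hL : 0 < L)
    (A : Fin m → Matrix (Fin n) (Fin n) ℝ) (hA : ∀ i, (A i).IsSymm)
    (b : Fin m → EuclideanSpace ℝ (Fin n))
    (g : EuclideanSpace ℝ (Fin n) → EuclideanSpace ℝ (Fin m))
    (hg : ∀ x i, g x i =
      (1 / 2) * (inner ℝ (Matrix.toEuclideanLin (A i) x) x : ℝ) + (inner ℝ (b i) x : ℝ))
    (H : Matrix (Fin m) (Fin n) ℝ) (hH : ∀ i j, H i j = b i j)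
    (hμ : ∀ h : EuclideanSpace ℝ (Fin m),
      μ₀ * ‖h‖ ≤ ‖Matrix.toEuclideanLin H.transpose h‖)
    (g' : EuclideanSpace ℝ (Fin n) →
      (EuclideanSpace ℝ (Fin n) →L[ℝ] EuclideanSpace ℝ (Fin m)))
    (hdiff : ∀ x, HasFDerivAt g (g' x) x)
    (hLip : ∀ x x', ‖g' x - g' x'‖ ≤ L * ‖x - x'‖)
    (y : EuclideanSpace ℝ (Fin m)) (hy : ‖y‖ < μ₀ ^ 2 / (4 * L)) :
    ∃ x : EuclideanSpace ℝ (Fin n), g x = y ∧ ‖x‖ ≤ μ₀ / (2 * L) := by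
  set Hc : EuclideanSpace ℝ (Fin n) →L[ℝ] EuclideanSpace ℝ (Fin m) :=
    (Matrix.toEuclideanLin H).toContinuousLinearMap with hHcdef
  have hg0 : g 0 = 0 := by
    ext i
    simp [hg]
  have hHcx : ∀ x i, Hc x i = (inner ℝ (b i) x : ℝ) := fun x i => row_apply b H hH x i
  set C : ℝ := ∑ i, ‖(Matrix.toEuclideanLin (A i)).toContinuousLinearMap‖ with hC
  -- quadratic remainder bound
  have hrem : ∀ x, ‖g x - g 0 - Hc x‖ ≤ (∑ i, ‖(Matrix.toEuclideanLin (A i)).toContinuousLinearMap‖) * ((1/2) * (‖x‖ * ‖x‖)) := by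
    intro x
    have hcomp : ∀ i, (g x - g 0 - Hc x) i
        = (1/2) * (inner ℝ (Matrix.toEuclideanLin (A i) x) x : ℝ) := by
      intro i
      rw [hg0, sub_zero]
      simp only [PiLp.sub_apply]
      rw [hg x i, hHcx x i]
      ring
    calc ‖g x - g 0 - Hc x‖ ≤ ∑ i, |(g x - g 0 - Hc x) i| := euclid_norm_le_sum_abs _
      _ ≤ ∑ i, ‖(Matrix.toEuclideanLin (A i)).toContinuousLinearMap‖ * ((1/2) * (‖x‖ * ‖x‖)) := by
          apply Finset.sum_le_sum
          intro i _
          rw [hcomp i]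
          have h1 : |(inner ℝ (Matrix.toEuclideanLin (A i) x) x : ℝ)|
              ≤ ‖Matrix.toEuclideanLin (A i) x‖ * ‖x‖ := abs_real_inner_le_norm _ _
          have h2 : ‖Matrix.toEuclideanLin (A i) x‖
              ≤ ‖(Matrix.toEuclideanLin (A i)).toContinuousLinearMap‖ * ‖x‖ := by
            exact ((Matrix.toEuclideanLin (A i)).toContinuousLinearMap).le_opNorm x
          rw [abs_mul, abs_of_nonneg (by norm_num : (0:ℝ) ≤ 1/2)]
          nlinarith [norm_nonneg x, norm_nonneg (Matrix.toEuclideanLin (A i) x)]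
      _ = (∑ i, ‖(Matrix.toEuclideanLin (A i)).toContinuousLinearMap‖) * ((1/2) * (‖x‖ * ‖x‖)) := by
          rw [Finset.sum_mul]
  -- derivative at 0 is Hc
  have hd0 : HasFDerivAt g Hc 0 := by
    rw [hasFDerivAt_iff_isLittleO_nhds_zero]
    have hbig : (fun h => g (0 + h) - g 0 - Hc h)
        =O[nhds (0 : EuclideanSpace ℝ (Fin n))] (fun h => ‖h‖ * ‖h‖) := by
      apply Asymptotics.IsBigO.of_bound (C * (1/2))
      filter_upwards with h
      have := hrem h
      rw [zero_add]
      have hn : ‖‖h‖ * ‖h‖‖ = ‖h‖ * ‖h‖ := by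
        rw [Real.norm_eq_abs, abs_of_nonneg (by positivity)]
      rw [hn]
      calc ‖g h - g 0 - Hc h‖ ≤ C * ((1/2) * (‖h‖ * ‖h‖)) := this
        _ = C * (1/2) * (‖h‖ * ‖h‖) := by ring
    have hsq : (fun h : EuclideanSpace ℝ (Fin n) => ‖h‖ * ‖h‖)
        =o[nhds (0 : EuclideanSpace ℝ (Fin n))] (fun h => h) := by
      rw [Asymptotics.isLittleO_iff]
      intro c hc
      filter_upwards [Metric.ball_mem_nhds (0 : EuclideanSpace ℝ (Fin n)) hc] with h hh
      have hlt : ‖h‖ < c := by simpa [Metric.mem_ball, dist_zero_right] using hh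
      have hn : ‖‖h‖ * ‖h‖‖ = ‖h‖ * ‖h‖ := by
        rw [Real.norm_eq_abs, abs_of_nonneg (by positivity)]
      rw [hn]
      exact mul_le_mul_of_nonneg_right hlt.le (norm_nonneg _)
    exact hbig.trans_isLittleO hsq
  have hg'0 : g' 0 = Hc := (hdiff 0).unique hd0
  set ε : ℝ := μ₀ / (2 * L) with hεdef
  have hε0 : 0 ≤ ε := by positivity
  set c : NNReal := ⟨μ₀ / 2, by positivity⟩ with hcdef
  have happrox : ApproximatesLinearOn g Hc (Metric.closedBall 0 ε) c := by
    intro x hx x' hx'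
    have hbound : ∀ z ∈ Metric.closedBall (0 : EuclideanSpace ℝ (Fin n)) ε,
        ‖g' z - Hc‖ ≤ μ₀ / 2 := by
      intro z hz
      rw [← hg'0]
      calc ‖g' z - g' 0‖ ≤ L * ‖z - 0‖ := hLip z 0
        _ = L * ‖z‖ := by rw [sub_zero]
        _ ≤ L * ε := by
            apply mul_le_mul_of_nonneg_left _ hL.le
            simpa [Metric.mem_closedBall, dist_zero_right] using hz
        _ = μ₀ / 2 := by rw [hεdef]; field_simp
    have := Convex.norm_image_sub_le_of_norm_hasFDerivWithin_le'
      (f := g) (f' := fun z => g' z) (φ := Hc) (C := μ₀ / 2)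
      (s := Metric.closedBall 0 ε)
      (fun z hz => (hdiff z).hasFDerivWithinAt) hbound (convex_closedBall _ _) hx' hx
    exact this
  have hexists := right_inverse_of_adjoint_bound μ₀ hμ₀ H hμ
  set fsymm : Hc.NonlinearRightInverse :=
    { toFun := fun y => (hexists y).choose
      nnnorm := ⟨μ₀⁻¹, by positivity⟩
      bound' := fun y => by exact (hexists y).choose_spec.2
      right_inv' := fun y => (hexists y).choose_spec.1 } with hfsymm
  have hsurj := happrox.surjOn_closedBall_of_nonlinearRightInverse fsymm hε0 (subset_refl _)
  have hymem : y ∈ Metric.closedBall (g 0) (((fsymm.nnnorm : ℝ)⁻¹ - c) * ε) := by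
    rw [hg0, Metric.mem_closedBall, dist_zero_right]
    have h1 : (fsymm.nnnorm : ℝ) = μ₀⁻¹ := rfl
    have h2 : (c : ℝ) = μ₀ / 2 := rfl
    rw [h1, h2, inv_inv]
    have h3 : (μ₀ - μ₀ / 2) * ε = μ₀ ^ 2 / (4 * L) := by
      rw [hεdef]; field_simp; ring
    rw [h3]
    exact hy.le
  obtain ⟨x, hx, hgx⟩ := hsurj hymem
  refine ⟨x, hgx, ?_⟩
  simpa [Metric.mem_closedBall, dist_zero_right] using hx
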